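/- Let F ⊂ ℝ^d be a nonempty finite set, w : F → ℝ positive on F, and let x* lie in the interior of the convex hull of F (assumed nonempty). Then the log-likelihood ℓ(θ) = ⟨θ, x*⟩ − log( Σ_{x∈F} w(x) exp⟨θ, x⟩ ) attains its supremum over ℝ^d; i.e., a maximum likelihood estimate θ̂ exists, and it satisfies Σ_{x∈F} P(x|θ̂) x = x* where P(x|θ) = w(x) exp⟨θ, x⟩ / Z(θ). -/

import Mathlib

open scoped RealInnerProductSpace

/-- MLE existence for ERGMs: if the observed statistic `x*` lies in the interior
of the convex hull of the finite feature set `F ⊂ ℝ^d` (with positive weights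
`w`), then the log-likelihood `ℓ(θ) = ⟪θ, x*⟫ − log Σ_{x∈F} w(x) exp⟪θ, x⟫`
attains its supremum at some `θ̂`, which moreover satisfies the mean-matching
condition `Σ_{x∈F} P(x|θ̂) x = x*`. -/
theorem ergm_mle_exists (d : ℕ)
    (F : Finset (EuclideanSpace ℝ (Fin d))) (hF : F.Nonempty)
    (w : EuclideanSpace ℝ (Fin d) → ℝ) (hw : ∀ x ∈ F, 0 < w x)
    (xs : EuclideanSpace ℝ (Fin d))
    (hxs : xs ∈ interior (convexHull ℝ (F : Set (EuclideanSpace ℝ (Fin d))))) :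
    ∃ θhat : EuclideanSpace ℝ (Fin d),
      IsMaxOn (fun θ : EuclideanSpace ℝ (Fin d) =>
        ⟪θ, xs⟫ - Real.log (∑ x ∈ F, w x * Real.exp ⟪θ, x⟫)) Set.univ θhat ∧
      (∑ x ∈ F, (w x * Real.exp ⟪θhat, x⟫ /
          ∑ y ∈ F, w y * Real.exp ⟪θhat, y⟫) • x) = xs := by
  set L : EuclideanSpace ℝ (Fin d) → ℝ := fun θ =>
    ⟪θ, xs⟫ - Real.log (∑ x ∈ F, w x * Real.exp ⟪θ, x⟫) with hLdef
  have hZpos : ∀ θ : EuclideanSpace ℝ (Fin d),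
      0 < ∑ x ∈ F, w x * Real.exp ⟪θ, x⟫ := fun θ =>
    Finset.sum_pos (fun x hx => mul_pos (hw x hx) (Real.exp_pos _)) hF
  have hcont : Continuous L := by
    apply Continuous.sub
    · exact continuous_id.inner continuous_const
    · exact Continuous.log
        (continuous_finset_sum _ fun x _ =>
          continuous_const.mul ((continuous_id.inner continuous_const).rexp))
        (fun θ => (hZpos θ).ne')
  -- ball inside the hull
  obtain ⟨ε, hε, hball⟩ := Metric.isOpen_iff.1 isOpen_interior xs hxs
  have hball' : Metric.ball xs ε ⊆ convexHull ℝ (F : Set (EuclideanSpace ℝ (Fin d))) :=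
    hball.trans interior_subset
  obtain ⟨xm, hxm, hxmmin⟩ := F.exists_min_image (fun x => Real.log (w x)) hF
  set m := Real.log (w xm) with hm
  -- coercivity
  have hcoer : ∀ θ, L θ ≤ -(ε / 2) * ‖θ‖ - m := by
    intro θ
    set u : EuclideanSpace ℝ (Fin d) := ‖θ‖⁻¹ • θ with hu
    have hunorm : ‖u‖ ≤ 1 := by
      rw [hu, norm_smul, norm_inv, norm_norm]
      rcases eq_or_ne θ 0 with h | h
      · simp [h]
      · rw [inv_mul_cancel₀ (norm_ne_zero_iff.2 h)]
    have hθu : ⟪θ, u⟫ = ‖θ‖ := by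
      rw [hu, real_inner_smul_right, real_inner_self_eq_norm_sq]
      rcases eq_or_ne θ 0 with h | h
      · simp [h]
      · field_simp [norm_ne_zero_iff.2 h]
    set p : EuclideanSpace ℝ (Fin d) := xs + (ε / 2) • u with hp
    have hpmem : p ∈ convexHull ℝ (F : Set (EuclideanSpace ℝ (Fin d))) := by
      apply hball'
      rw [Metric.mem_ball, hp, dist_eq_norm]
      rw [add_sub_cancel_left, norm_smul]
      calc ‖(ε/2 : ℝ)‖ * ‖u‖ ≤ (ε/2) * 1 := by
            apply mul_le_mul _ hunorm (norm_nonneg _) (by linarith)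
            rw [Real.norm_eq_abs, abs_of_pos (by linarith)]
          _ < ε := by linarith
    obtain ⟨x₀, hx₀, hx₀max⟩ := F.exists_max_image (fun x => ⟪θ, x⟫) hF
    have hhalf : ⟪θ, p⟫ ≤ ⟪θ, x₀⟫ := by
      have hconv : convexHull ℝ (F : Set (EuclideanSpace ℝ (Fin d))) ⊆
          {y | ⟪θ, y⟫ ≤ ⟪θ, x₀⟫} := by
        apply convexHull_min
        · intro x hx; exact hx₀max x hx
        · exact convex_halfSpace_le
            ⟨fun a b => inner_add_right θ a b, fun c a => real_inner_smul_right θ a c⟩ _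
      exact hconv hpmem
    have hip : ⟪θ, p⟫ = ⟪θ, xs⟫ + (ε / 2) * ‖θ‖ := by
      rw [hp, inner_add_right, real_inner_smul_right, hθu]
    -- log Z ≥ m + ⟪θ,x₀⟫
    have hZge : w x₀ * Real.exp ⟪θ, x₀⟫ ≤ ∑ x ∈ F, w x * Real.exp ⟪θ, x⟫ :=
      Finset.single_le_sum (fun x hx => le_of_lt (mul_pos (hw x hx) (Real.exp_pos _))) hx₀
    have hlogZ : m + ⟪θ, x₀⟫ ≤ Real.log (∑ x ∈ F, w x * Real.exp ⟪θ, x⟫) := by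
      have h1 : Real.log (w x₀ * Real.exp ⟪θ, x₀⟫) ≤
          Real.log (∑ x ∈ F, w x * Real.exp ⟪θ, x⟫) :=
        Real.log_le_log (mul_pos (hw x₀ hx₀) (Real.exp_pos _)) hZge
      rw [Real.log_mul (hw x₀ hx₀).ne' (Real.exp_pos _).ne', Real.log_exp] at h1
      exact le_trans (add_le_add_left (hxmmin x₀ hx₀) _) h1
    have : L θ = ⟪θ, xs⟫ - Real.log (∑ x ∈ F, w x * Real.exp ⟪θ, x⟫) := rfl
    rw [this]
    have hx₀ge : ⟪θ, xs⟫ + (ε / 2) * ‖θ‖ ≤ ⟪θ, x₀⟫ := hip ▸ hhalf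
    linarith
  -- compactness argument
  set K : Set (EuclideanSpace ℝ (Fin d)) := {θ | L 0 ≤ L θ} with hK
  have hKclosed : IsClosed K := isClosed_le continuous_const hcont
  have hKbdd : Bornology.IsBounded K := by
    apply (Metric.isBounded_closedBall (x := (0 : EuclideanSpace ℝ (Fin d)))
      (r := (-m - L 0) / (ε / 2))).subset
    intro θ hθ
    rw [Metric.mem_closedBall, dist_zero_right]
    have h1 : L 0 ≤ -(ε / 2) * ‖θ‖ - m := le_trans hθ (hcoer θ)
    rw [le_div_iff₀ (by linarith)]
    linarith [mul_comm (ε / 2) ‖θ‖]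
  have hKcompact : IsCompact K := Metric.isCompact_iff_isClosed_bounded.mpr ⟨hKclosed, hKbdd⟩
  have h0K : (0 : EuclideanSpace ℝ (Fin d)) ∈ K := by
    show L 0 ≤ L 0; exact le_refl _
  obtain ⟨θhat, hθhatK, hmaxK⟩ := hKcompact.exists_isMaxOn ⟨0, h0K⟩ hcont.continuousOn
  have hmax : IsMaxOn L Set.univ θhat := by
    intro θ _
    by_cases h : θ ∈ K
    · exact hmaxK h
    · have : L θ < L 0 := lt_of_not_ge h
      exact le_trans this.le (hmaxK h0K)
  refine ⟨θhat, hmax, ?_⟩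
  -- stationarity
  set Z : ℝ := ∑ y ∈ F, w y * Real.exp ⟪θhat, y⟫ with hZ
  have hZpos' : 0 < Z := hZpos θhat
  apply ext_inner_left ℝ
  intro v
  -- directional function
  set f : ℝ → ℝ := fun t =>
    (⟪θhat, xs⟫ + t * ⟪v, xs⟫) -
      Real.log (∑ x ∈ F, w x * Real.exp (⟪θhat, x⟫ + t * ⟪v, x⟫)) with hf
  have hfL : ∀ t, f t = L (θhat + t • v) := by
    intro t
    simp only [hf, hLdef, inner_add_left, real_inner_smul_left]
  have hlocmax : IsLocalMax f 0 := by
    apply Filter.Eventually.of_forall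
    intro t
    rw [hfL t, hfL 0]
    have h0 : L (θhat + (0 : ℝ) • v) = L θhat := by norm_num
    rw [h0]
    exact hmax (Set.mem_univ _)
  -- derivative of f at 0
  have hg : HasDerivAt (fun t => ∑ x ∈ F, w x * Real.exp (⟪θhat, x⟫ + t * ⟪v, x⟫))
      (∑ x ∈ F, w x * Real.exp ⟪θhat, x⟫ * ⟪v, x⟫) 0 := by
    apply HasDerivAt.fun_sum
    intro x _
    have h1 : HasDerivAt (fun t : ℝ => ⟪θhat, x⟫ + t * ⟪v, x⟫) ⟪v, x⟫ 0 :=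
      (hasDerivAt_mul_const ⟪v, x⟫).const_add _
    have h2 := (h1.exp).const_mul (w x)
    simpa [mul_assoc] using h2
  have hg0 : ∑ x ∈ F, w x * Real.exp (⟪θhat, x⟫ + 0 * ⟪v, x⟫) = Z := by
    simp [hZ]
  have hflog : HasDerivAt
      (fun t => Real.log (∑ x ∈ F, w x * Real.exp (⟪θhat, x⟫ + t * ⟪v, x⟫)))
      ((∑ x ∈ F, w x * Real.exp ⟪θhat, x⟫ * ⟪v, x⟫) / Z) 0 := by
    have := hg.log (by rw [hg0]; exact hZpos'.ne')
    rwa [hg0] at this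
  have hlin : HasDerivAt (fun t : ℝ => ⟪θhat, xs⟫ + t * ⟪v, xs⟫) ⟪v, xs⟫ 0 :=
    (hasDerivAt_mul_const ⟪v, xs⟫).const_add _
  have hfd : HasDerivAt f (⟪v, xs⟫ - (∑ x ∈ F, w x * Real.exp ⟪θhat, x⟫ * ⟪v, x⟫) / Z) 0 :=
    hlin.sub hflog
  have hzero := hlocmax.hasDerivAt_eq_zero hfd
  have hvxs : ⟪v, xs⟫ = (∑ x ∈ F, w x * Real.exp ⟪θhat, x⟫ * ⟪v, x⟫) / Z := by linarith
  rw [inner_sum, hvxs, Finset.sum_div]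
  apply Finset.sum_congr rfl
  intro x _
  rw [real_inner_smul_right]
  ring
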